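/- arXiv:2011.04576 — 3 statements merged into one kernel-verified Lean document; each statement's English description precedes it below -/
import Mathlib

section
/- Suppose the hierarchical model decomposition identity x(t) = P₀ξ₀(t) + Σ_{i=1}^N P_i ξ_i(t) holds for all t ≥ 0, all admissible initial conditions satisfying the identity at t = 0, and all inputs, where P₀ has full column rank. Then necessarily Â₀ = P₀† A P₀ and A·P₀ = P₀·Â₀, i.e., the global reduced model matrix is uniquely determined. -/
open Matrix

section Aux

open NormedSpace

attribute [local instance] Matrix.linftyOpNormedRing Matrix.linftyOpNormedAlgebra

/-- Derivative of `t ↦ exp (t • M) *ᵥ c`. -/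
lemma hasDerivAt_exp_mulVec {k : ℕ} (M : Matrix (Fin k) (Fin k) ℝ) (c : Fin k → ℝ) (t : ℝ) :
    HasDerivAt (fun s : ℝ => exp (s • M) *ᵥ c) ((M * exp (t • M)) *ᵥ c) t := by
  have hexp : HasDerivAt (fun s : ℝ => exp (s • M)) (M * exp (t • M)) t :=
    hasDerivAt_exp_smul_const' M t
  let L : Matrix (Fin k) (Fin k) ℝ →ₗ[ℝ] (Fin k → ℝ) :=
    { toFun := fun N => N *ᵥ c
      map_add' := fun N₁ N₂ => Matrix.add_mulVec N₁ N₂ c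
      map_smul' := fun r N => (Matrix.smul_mulVec r N c) }
  have hL := (LinearMap.toContinuousLinearMap L).hasFDerivAt (x := exp (t • M))
  exact hL.comp_hasDerivAt t hexp

lemma exp_zero_smul {k : ℕ} (M : Matrix (Fin k) (Fin k) ℝ) : exp ((0:ℝ) • M) = 1 := by
  rw [zero_smul]; exact exp_zero

end Aux

/-- If the hierarchical model decomposition identity holds for all consistent initial
conditions and all inputs, and `P₀` has full column rank (witnessed by a left inverse `Q`,
playing the role of the pseudoinverse `P₀†`), and `im P₀` is `A`-invariant, then
necessarily `Â₀ = P₀† A P₀` and `A P₀ = P₀ Â₀`. -/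
theorem stmt_6 {n n₀ N m₀ : ℕ} {ni mi : Fin N → ℕ}
    (A : Matrix (Fin n) (Fin n) ℝ) (P₀ : Matrix (Fin n) (Fin n₀) ℝ)
    (P : ∀ i, Matrix (Fin n) (Fin (ni i)) ℝ)
    (B₀ : Matrix (Fin n₀) (Fin m₀) ℝ) (B : ∀ i, Matrix (Fin (ni i)) (Fin (mi i)) ℝ)
    (Ahat₀ : Matrix (Fin n₀) (Fin n₀) ℝ)
    (Ahat : ∀ i, Matrix (Fin (ni i)) (Fin (ni i)) ℝ)
    (Rhat : ∀ i, Matrix (Fin n₀) (Fin (ni i)) ℝ)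
    (Q : Matrix (Fin n₀) (Fin n) ℝ) (hQ : Q * P₀ = 1)
    (hinv : ∀ x ∈ LinearMap.range P₀.mulVecLin, A *ᵥ x ∈ LinearMap.range P₀.mulVecLin)
    (hHMD : ∀ (u₀ : ℝ → Fin m₀ → ℝ) (u : ∀ i, ℝ → Fin (mi i) → ℝ),
      Continuous u₀ → (∀ i, Continuous (u i)) →
      ∀ (x : ℝ → Fin n → ℝ) (ξ₀ : ℝ → Fin n₀ → ℝ) (ξ : ∀ i, ℝ → Fin (ni i) → ℝ),
      (∀ t, HasDerivAt x
        (A *ᵥ x t + P₀ *ᵥ (B₀ *ᵥ u₀ t) + ∑ i, P i *ᵥ (B i *ᵥ u i t)) t) →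
      (∀ i t, HasDerivAt (ξ i) (Ahat i *ᵥ ξ i t + B i *ᵥ u i t) t) →
      (∀ t, HasDerivAt ξ₀
        (Ahat₀ *ᵥ ξ₀ t + ∑ i, Rhat i *ᵥ ξ i t + B₀ *ᵥ u₀ t) t) →
      x 0 = P₀ *ᵥ ξ₀ 0 + ∑ i, P i *ᵥ ξ i 0 →
      ∀ t : ℝ, 0 ≤ t → x t = P₀ *ᵥ ξ₀ t + ∑ i, P i *ᵥ ξ i t) :
    Ahat₀ = Q * A * P₀ ∧ A * P₀ = P₀ * Ahat₀ := by
  classical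
  -- key pointwise identity
  have key : ∀ v : Fin n₀ → ℝ, (A * P₀) *ᵥ v = (P₀ * Ahat₀) *ᵥ v := by
    intro v
    set x : ℝ → Fin n → ℝ := fun t => NormedSpace.exp (t • A) *ᵥ (P₀ *ᵥ v) with hxdef
    set ξ₀ : ℝ → Fin n₀ → ℝ := fun t => NormedSpace.exp (t • Ahat₀) *ᵥ v with hξdef
    have hx : ∀ t, HasDerivAt x (A *ᵥ x t) t := by
      intro t
      have := hasDerivAt_exp_mulVec A (P₀ *ᵥ v) t
      simpa [hxdef, Matrix.mulVec_mulVec, Matrix.mul_assoc] using this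
    have hξ : ∀ t, HasDerivAt ξ₀ (Ahat₀ *ᵥ ξ₀ t) t := by
      intro t
      have := hasDerivAt_exp_mulVec Ahat₀ v t
      simpa [hξdef, Matrix.mulVec_mulVec, Matrix.mul_assoc] using this
    have heq : ∀ t : ℝ, 0 ≤ t → x t = P₀ *ᵥ ξ₀ t := by
      have h := hHMD (fun _ => 0) (fun _ _ => 0) continuous_const (fun _ => continuous_const)
        x ξ₀ (fun _ _ => 0)
        (fun t => by simpa using hx t)
        (fun i t => by simpa using hasDerivAt_const t (0 : Fin (ni i) → ℝ))
        (fun t => by simpa using hξ t)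
        (by simp [hxdef, hξdef, exp_zero_smul, Matrix.one_mulVec])
      intro t ht
      simpa using h t ht
    -- compare derivatives at 0 from the right
    have hd1 : HasDerivWithinAt x (A *ᵥ x 0) (Set.Ici 0) 0 := (hx 0).hasDerivWithinAt
    have hd2' : HasDerivAt (fun t => P₀ *ᵥ ξ₀ t) (P₀ *ᵥ (Ahat₀ *ᵥ ξ₀ 0)) 0 :=
      (Matrix.mulVecLin P₀).toContinuousLinearMap.hasFDerivAt.comp_hasDerivAt 0 (hξ 0)
    have hd2 : HasDerivWithinAt x (P₀ *ᵥ (Ahat₀ *ᵥ ξ₀ 0)) (Set.Ici 0) 0 :=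
      (hd2'.hasDerivWithinAt).congr (fun y hy => heq y hy) (heq 0 le_rfl)
    have huniq : UniqueDiffWithinAt ℝ (Set.Ici (0:ℝ)) 0 :=
      uniqueDiffOn_Ici 0 0 Set.self_mem_Ici
    have := huniq.eq hd1.hasFDerivWithinAt hd2.hasFDerivWithinAt
    have hder : A *ᵥ x 0 = P₀ *ᵥ (Ahat₀ *ᵥ ξ₀ 0) := by
      simpa using congrArg (fun L : ℝ →L[ℝ] (Fin n → ℝ) => L 1) this
    have hx0 : x 0 = P₀ *ᵥ v := by simp [hxdef, exp_zero_smul, Matrix.one_mulVec]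
    have hξ0 : ξ₀ 0 = v := by simp [hξdef, exp_zero_smul, Matrix.one_mulVec]
    rw [hx0, hξ0] at hder
    simpa [Matrix.mulVec_mulVec] using hder
  have hAP : A * P₀ = P₀ * Ahat₀ := by
    ext i j
    simpa [Matrix.mulVec_single] using congrFun (key (Pi.single j 1)) i
  refine ⟨?_, hAP⟩
  calc Ahat₀ = (Q * P₀) * Ahat₀ := by rw [hQ, one_mul]
    _ = Q * (P₀ * Ahat₀) := by rw [Matrix.mul_assoc]
    _ = Q * (A * P₀) := by rw [hAP]
    _ = Q * A * P₀ := by rw [Matrix.mul_assoc]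
end

section
/- Suppose for each i = 1,…,N: R(A, P_i) ⊆ im P_i + im P₀ and im(π_i P₀) ⊆ R(A, [P_1 ⋯ P_{i−1} P_{i+1} ⋯ P_N]), where π_i = P_iP_iᵀ. Suppose also that the images im P_1, …, im P_N are mutually orthogonal, span ℝ^n, each P_i has orthonormal columns, and im P₀ = ⊕_{i=1}^N im(π_i P₀). Then im P₀ is A-invariant, i.e., R(A, P₀) ⊆ im P₀. -/
open Matrix

/-- The controllable subspace `R(A,B)`: the smallest `A`-invariant subspace
containing `im B`. -/
noncomputable def ctrlSubspace {n m : ℕ} (A : Matrix (Fin n) (Fin n) ℝ)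
    (B : Matrix (Fin n) (Fin m) ℝ) : Submodule ℝ (Fin n → ℝ) :=
  ⨆ k : ℕ, LinearMap.range ((A ^ k * B).mulVecLin)

/-- The range of `(M*B).mulVecLin` is the image of the range of `B.mulVecLin`. -/
lemma range_mul_eq_map {n m : ℕ} (M : Matrix (Fin n) (Fin n) ℝ)
    (B : Matrix (Fin n) (Fin m) ℝ) :
    LinearMap.range (M * B).mulVecLin =
      Submodule.map M.mulVecLin (LinearMap.range B.mulVecLin) := by
  rw [Matrix.mulVecLin_mul, LinearMap.range_comp]

/-- The controllable subspace is `A`-invariant. -/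
lemma ctrl_invariant {n m : ℕ} (A : Matrix (Fin n) (Fin n) ℝ)
    (B : Matrix (Fin n) (Fin m) ℝ) :
    Submodule.map A.mulVecLin (ctrlSubspace A B) ≤ ctrlSubspace A B := by
  rw [ctrlSubspace, Submodule.map_iSup]
  apply iSup_le
  intro k
  rw [← range_mul_eq_map, ← Matrix.mul_assoc, ← pow_succ']
  exact le_iSup (fun k => LinearMap.range ((A ^ k * B).mulVecLin)) (k + 1)

/-- `im B ≤ R(A,B)`. -/
lemma range_le_ctrl {n m : ℕ} (A : Matrix (Fin n) (Fin n) ℝ)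
    (B : Matrix (Fin n) (Fin m) ℝ) :
    LinearMap.range B.mulVecLin ≤ ctrlSubspace A B := by
  rw [ctrlSubspace]
  exact le_iSup_of_le 0 (by rw [pow_zero, Matrix.one_mul])

/-- Proposition 4: if `R(A,P_i) ⊆ im P_i + im P₀` for all `i` and each
`im (π_i P₀)` is reachable from the other clusters, where the `P_i` have orthonormal
columns with mutually orthogonal images spanning `ℝⁿ` and
`im P₀ = ⊕_i im (π_i P₀)`, then `im P₀` is `A`-invariant: `R(A,P₀) ⊆ im P₀`. -/
theorem stmt_10 {n n₀ N : ℕ} {ni : Fin N → ℕ}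
    (A : Matrix (Fin n) (Fin n) ℝ) (P₀ : Matrix (Fin n) (Fin n₀) ℝ)
    (P : ∀ i, Matrix (Fin n) (Fin (ni i)) ℝ)
    (horthonormal : ∀ i, (P i)ᵀ * P i = 1)
    (hmutual : ∀ i j, i ≠ j → (P i)ᵀ * P j = 0)
    (hspan : (⨆ i, LinearMap.range (P i).mulVecLin) = ⊤)
    (hP₀ : LinearMap.range P₀.mulVecLin =
      ⨆ i, LinearMap.range ((P i * (P i)ᵀ * P₀).mulVecLin))
    (h11a : ∀ i, ctrlSubspace A (P i) ≤
      LinearMap.range (P i).mulVecLin ⊔ LinearMap.range P₀.mulVecLin)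
    (h12 : ∀ i, LinearMap.range ((P i * (P i)ᵀ * P₀).mulVecLin) ≤
      ⨆ j, ⨆ _ : j ≠ i, ctrlSubspace A (P j)) :
    ctrlSubspace A P₀ ≤ LinearMap.range P₀.mulVecLin := by
  -- π k * P k = P k
  have hπP : ∀ k, P k * (P k)ᵀ * P k = P k := by
    intro k
    rw [Matrix.mul_assoc, horthonormal, Matrix.mul_one]
  -- π k * P j = 0 for k ≠ j
  have hπ0 : ∀ k j, k ≠ j → P k * (P k)ᵀ * P j = 0 := by
    intro k j h
    rw [Matrix.mul_assoc, hmutual k j h, Matrix.mul_zero]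
  -- π k kills im (P j) for j ≠ k
  have hπV : ∀ k j, k ≠ j → ∀ y ∈ LinearMap.range (P j).mulVecLin,
      (P k * (P k)ᵀ).mulVec y = 0 := by
    rintro k j h y ⟨u, rfl⟩
    show (P k * (P k)ᵀ).mulVec ((P j).mulVec u) = 0
    rw [Matrix.mulVec_mulVec, hπ0 k j h, Matrix.zero_mulVec]
  -- π k maps im P₀ into im P₀
  have hπV₀ : ∀ k, ∀ y ∈ LinearMap.range P₀.mulVecLin,
      (P k * (P k)ᵀ).mulVec y ∈ LinearMap.range P₀.mulVecLin := by
    rintro k y ⟨v, rfl⟩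
    rw [hP₀]
    have : (P k * (P k)ᵀ).mulVec (P₀.mulVecLin v) ∈
        LinearMap.range ((P k * (P k)ᵀ * P₀).mulVecLin) :=
      ⟨v, by rw [Matrix.mulVecLin_apply, Matrix.mulVecLin_apply, Matrix.mulVec_mulVec]⟩
    exact le_iSup (fun i => LinearMap.range ((P i * (P i)ᵀ * P₀).mulVecLin)) k this
  -- resolution of identity: ∑ k, π k x = x
  have hres : ∀ x : Fin n → ℝ, ∑ k, (P k * (P k)ᵀ).mulVec x = x := by
    have hker : (⨆ i, LinearMap.range (P i).mulVecLin) ≤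
        LinearMap.ker ((∑ k, (P k * (P k)ᵀ).mulVecLin) - LinearMap.id) := by
      apply iSup_le
      intro j
      rintro x ⟨u, rfl⟩
      simp only [LinearMap.mem_ker, LinearMap.sub_apply, LinearMap.sum_apply,
        LinearMap.id_apply, sub_eq_zero]
      rw [Finset.sum_eq_single j]
      · show (P j * (P j)ᵀ).mulVec ((P j).mulVec u) = (P j).mulVecLin u
        rw [Matrix.mulVec_mulVec, hπP, Matrix.mulVecLin_apply]
      · intro k _ hk
        exact hπV k j hk _ ⟨u, rfl⟩
      · intro h
        exact absurd (Finset.mem_univ j) h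
    intro x
    have hx : x ∈ (⨆ i, LinearMap.range (P i).mulVecLin) := by
      rw [hspan]; trivial
    have := hker hx
    simp only [LinearMap.mem_ker, LinearMap.sub_apply, LinearMap.sum_apply,
      LinearMap.id_apply, sub_eq_zero, Matrix.mulVecLin_apply] at this
    exact this
  -- Key step: A maps each im(π i P₀) into im P₀
  have hkey : ∀ i, ∀ x ∈ LinearMap.range ((P i * (P i)ᵀ * P₀).mulVecLin),
      A.mulVec x ∈ LinearMap.range P₀.mulVecLin := by
    intro i x hx
    -- x ∈ im (P i)
    have hxVi : x ∈ LinearMap.range (P i).mulVecLin := by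
      obtain ⟨u, rfl⟩ := hx
      refine ⟨((P i)ᵀ * P₀).mulVec u, ?_⟩
      show (P i).mulVec (((P i)ᵀ * P₀).mulVec u) = (P i * (P i)ᵀ * P₀).mulVecLin u
      rw [Matrix.mulVec_mulVec, ← Matrix.mul_assoc, Matrix.mulVecLin_apply]
    -- A x ∈ im (P i) ⊔ im P₀
    have hAx1 : A.mulVec x ∈
        LinearMap.range (P i).mulVecLin ⊔ LinearMap.range P₀.mulVecLin := by
      apply h11a i
      apply ctrl_invariant A (P i)
      exact ⟨x, range_le_ctrl A (P i) hxVi, rfl⟩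
    -- A x ∈ (⨆_{j ≠ i} im (P j)) ⊔ im P₀
    have hAx2 : A.mulVec x ∈
        (⨆ j, ⨆ _ : j ≠ i, LinearMap.range (P j).mulVecLin) ⊔
          LinearMap.range P₀.mulVecLin := by
      have hx2 : x ∈ ⨆ j, ⨆ _ : j ≠ i, ctrlSubspace A (P j) := h12 i hx
      have hAx : A.mulVec x ∈ ⨆ j, ⨆ _ : j ≠ i, ctrlSubspace A (P j) := by
        have hmap : Submodule.map A.mulVecLin
            (⨆ j, ⨆ _ : j ≠ i, ctrlSubspace A (P j)) ≤
            ⨆ j, ⨆ _ : j ≠ i, ctrlSubspace A (P j) := by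
          rw [Submodule.map_iSup]
          apply iSup_le; intro j
          rw [Submodule.map_iSup]
          apply iSup_le; intro hj
          exact le_trans (ctrl_invariant A (P j))
            (le_iSup_of_le j (le_iSup_of_le hj le_rfl))
        exact hmap ⟨x, hx2, rfl⟩
      refine (iSup_le fun j => iSup_le fun hj => ?_ :
        (⨆ j, ⨆ _ : j ≠ i, ctrlSubspace A (P j)) ≤ _) hAx
      exact le_trans (h11a j)
        (sup_le_sup (le_iSup_of_le j (le_iSup_of_le hj le_rfl)) le_rfl)
    -- decompose
    obtain ⟨p, hp, q', hq', hpq'⟩ := Submodule.mem_sup.mp hAx1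
    obtain ⟨s, hs, q, hq, hsq⟩ := Submodule.mem_sup.mp hAx2
    -- π i kills s
    have hπis : (P i * (P i)ᵀ).mulVec s = 0 := by
      have hle : (⨆ j, ⨆ _ : j ≠ i, LinearMap.range (P j).mulVecLin) ≤
          LinearMap.ker ((P i * (P i)ᵀ).mulVecLin) := by
        apply iSup_le; intro j
        apply iSup_le; intro hj
        intro y hy
        exact hπV i j (Ne.symm hj) y hy
      exact hle hs
    -- each π k (A x) ∈ im P₀
    have hterm : ∀ k, (P k * (P k)ᵀ).mulVec (A.mulVec x) ∈
        LinearMap.range P₀.mulVecLin := by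
      intro k
      by_cases hk : k = i
      · subst hk
        rw [← hsq, Matrix.mulVec_add, hπis, zero_add]
        exact hπV₀ k q hq
      · rw [← hpq', Matrix.mulVec_add, hπV k i hk p hp, zero_add]
        exact hπV₀ k q' hq'
    rw [← hres (A.mulVec x)]
    exact Submodule.sum_mem _ fun k _ => hterm k
  -- A maps im P₀ into im P₀
  have hinv : ∀ x ∈ LinearMap.range P₀.mulVecLin,
      A.mulVec x ∈ LinearMap.range P₀.mulVecLin := by
    intro x hx
    rw [hP₀] at hx
    have hle : (⨆ i, LinearMap.range ((P i * (P i)ᵀ * P₀).mulVecLin)) ≤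
        Submodule.comap A.mulVecLin (LinearMap.range P₀.mulVecLin) := by
      apply iSup_le; intro i
      intro y hy
      exact hkey i y hy
    exact hle hx
  -- conclude by induction over powers
  apply iSup_le
  intro k
  induction k with
  | zero => simp
  | succ k ih =>
    rw [pow_succ', Matrix.mul_assoc, range_mul_eq_map]
    rintro y ⟨z, hz, rfl⟩
    exact hinv z (ih hz)
end

section
/- For the second-order network system ẋ = Ax with A the block matrix arising from m_k θ̈_k + d_k θ̇_k + Σ_{l∈N_k} α_{kl}(θ_k − θ_l) = 0, if the parameters (m_k, d_k) are identical within each cluster and the interconnection Laplacian is equitable with respect to the cluster partition (each node in cluster i has the same total coupling weight to each cluster j), then the synchronization subspace im P₀ (vectors constant within each cluster, in both θ and ω coordinates) is A-invariant. -/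
/-- For the second-order network system `θ̇_k = ω_k`,
`ω̇_k = −(d_k/m_k) ω_k − (1/m_k) Σ_l L_{kl} θ_l`, if the parameters `(m_k, d_k)` are
identical within each cluster and the Laplacian is equitable with respect to the
cluster partition, then the synchronization subspace (vectors `(θ, ω)` constant within
each cluster in both coordinates) is invariant under the dynamics matrix. -/
theorem stmt_19 {N₀ N : ℕ} (c : Fin N₀ → Fin N) (m d : Fin N₀ → ℝ)
    (L : Matrix (Fin N₀) (Fin N₀) ℝ)
    (hm : ∀ k, m k ≠ 0)
    (hpar : ∀ k k', c k = c k' → m k = m k' ∧ d k = d k')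
    (hequit : ∀ (j : Fin N) (k k' : Fin N₀), c k = c k' →
      (∑ l, if c l = j then L k l else 0) = ∑ l, if c l = j then L k' l else 0) :
    ∀ θ ω : Fin N₀ → ℝ,
      (∀ k k', c k = c k' → θ k = θ k') →
      (∀ k k', c k = c k' → ω k = ω k') →
      (∀ k k', c k = c k' → ω k = ω k') ∧
      (∀ k k', c k = c k' →
        -(d k / m k) * ω k - (1 / m k) * ∑ l, L k l * θ l =
          -(d k' / m k') * ω k' - (1 / m k') * ∑ l, L k' l * θ l) := by
  intro θ ω hθ hω
  refine ⟨hω, ?_⟩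
  intro k k' hc
  classical
  have hΘ : ∀ l l', c l = c l' → θ l = θ l' := hθ
  set Θ : Fin N → ℝ := fun j => if h : ∃ l, c l = j then θ h.choose else 0 with hΘdef
  have hlΘ : ∀ l, θ l = Θ (c l) := by
    intro l
    have h : ∃ l', c l' = c l := ⟨l, rfl⟩
    simp only [hΘdef, dif_pos h]
    exact hθ l h.choose h.choose_spec.symm
  have key : ∀ a : Fin N₀, (∑ l, L a l * θ l)
      = ∑ j, Θ j * ∑ l, (if c l = j then L a l else 0) := by
    intro a
    rw [← Finset.sum_fiberwise Finset.univ c (fun l => L a l * θ l)]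
    refine Finset.sum_congr rfl ?_
    intro j _
    rw [Finset.sum_filter, Finset.mul_sum]
    refine Finset.sum_congr rfl ?_
    intro l _
    by_cases h : c l = j
    · rw [if_pos h, if_pos h, hlΘ l, h, mul_comm]
    · rw [if_neg h, if_neg h, mul_zero]
  have hsum : (∑ l, L k l * θ l) = ∑ l, L k' l * θ l := by
    rw [key k, key k']
    exact Finset.sum_congr rfl fun j _ => by rw [hequit j k k' hc]
  obtain ⟨hmeq, hdeq⟩ := hpar k k' hc
  rw [hsum, hmeq, hdeq, hω k k' hc]
end
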